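/- Let X be a nonempty finite set of positive integers and n a positive integer. Then D(X, n) = ∑_{d ∣ n} f((1/d)·X_d), where the sum is over positive divisors d of n. -/

import Mathlib

/-- `fSet X` is the number of nonempty relatively prime subsets of `X`. -/
def fSet (X : Finset ℕ) : ℕ :=
  (X.powerset.filter fun A => A.Nonempty ∧ A.gcd id = 1).card

/-- `DSet X n` is the number of nonempty subsets `A` of `X` with `gcd(A) ∣ n`. -/
def DSet (X : Finset ℕ) (n : ℕ) : ℕ :=
  (X.powerset.filter fun A => A.Nonempty ∧ A.gcd id ∣ n).card

lemma gcd_div_mul (d : ℕ) (A : Finset ℕ) (h : ∀ a ∈ A, d ∣ a) :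
    A.gcd (· / d) * d = A.gcd id := by
  induction A using Finset.induction_on with
  | empty => simp
  | @insert a s hx ih =>
    simp only [Finset.gcd_insert, id_eq]
    rw [show (GCDMonoid.gcd : ℕ → ℕ → ℕ) = Nat.gcd from rfl]
    rw [← Nat.gcd_mul_right, ih (fun a ha => h a (Finset.mem_insert_of_mem ha)),
      Nat.div_mul_cancel (h a (Finset.mem_insert_self a s))]

lemma gcd_mul_right'' (d : ℕ) (B : Finset ℕ) : B.gcd (· * d) = B.gcd id * d := by
  rw [Finset.gcd_mul_right]; simp; left; rfl

lemma image_div_mul (d : ℕ) (A : Finset ℕ) (h : ∀ a ∈ A, d ∣ a) :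
    (A.image (· / d)).image (· * d) = A := by
  rw [Finset.image_image,
    Finset.image_congr (g := id) (fun a ha => by simp [Nat.div_mul_cancel (h a ha)])]
  exact Finset.image_id

/-- For a nonempty finite set `X` of positive integers and a positive integer `n`,
`D(X, n) = ∑_{d ∣ n} f((1/d) X_d)`, where `X_d = {x ∈ X : d ∣ x}`. -/
theorem DSet_eq_sum (X : Finset ℕ) (hX : X.Nonempty) (hpos : ∀ x ∈ X, 0 < x)
    (n : ℕ) (hn : 0 < n) :
    DSet X n = ∑ d ∈ n.divisors, fSet ((X.filter fun x => d ∣ x).image (· / d)) := by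
  rw [DSet]
  rw [Finset.card_eq_sum_card_fiberwise (f := fun A => A.gcd id) (t := n.divisors)
    (fun A hA => by
      simp only [Finset.mem_coe, Finset.mem_filter] at hA
      exact Nat.mem_divisors.2 ⟨hA.2.2, hn.ne'⟩)]
  refine Finset.sum_congr rfl fun d hd => ?_
  obtain ⟨hdn, hn0⟩ := Nat.mem_divisors.1 hd
  have hd0 : 0 < d := Nat.pos_of_mem_divisors hd
  rw [fSet]
  apply Finset.card_bij (fun A _ => A.image (· / d))
  · -- maps into
    intro A hA
    simp only [Finset.mem_filter, Finset.mem_powerset] at hA ⊢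
    obtain ⟨⟨hAX, hne, _⟩, hg⟩ := hA
    have hdvd : ∀ a ∈ A, d ∣ a := fun a ha => hg ▸ Finset.gcd_dvd ha
    refine ⟨Finset.image_subset_image
        (fun a ha => Finset.mem_filter.2 ⟨hAX ha, hdvd a ha⟩), hne.image _, ?_⟩
    · rw [Finset.gcd_image, show ((id ∘ (· / d)) : ℕ → ℕ) = (· / d) from rfl]
      refine Nat.eq_of_mul_eq_mul_right hd0 ?_
      rw [one_mul, gcd_div_mul d A hdvd, hg]
  · -- inj
    intro A₁ h₁ A₂ h₂ heq
    simp only [Finset.mem_filter, Finset.mem_powerset] at h₁ h₂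
    have hdvd₁ : ∀ a ∈ A₁, d ∣ a := fun a ha => h₁.2 ▸ Finset.gcd_dvd ha
    have hdvd₂ : ∀ a ∈ A₂, d ∣ a := fun a ha => h₂.2 ▸ Finset.gcd_dvd ha
    rw [← image_div_mul d A₁ hdvd₁, ← image_div_mul d A₂ hdvd₂, heq]
  · -- surj
    intro B hB
    simp only [Finset.mem_filter, Finset.mem_powerset] at hB
    obtain ⟨hBsub, hBne, hBg⟩ := hB
    refine ⟨B.image (· * d), ?_, ?_⟩
    · have hsub : B.image (· * d) ⊆ X.filter fun x => d ∣ x := by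
        calc B.image (· * d) ⊆ ((X.filter fun x => d ∣ x).image (· / d)).image (· * d) :=
              Finset.image_subset_image hBsub
        _ = X.filter fun x => d ∣ x :=
              image_div_mul d _ (fun a ha => (Finset.mem_filter.1 ha).2)
      have hgcd : (B.image (· * d)).gcd id = d := by
        rw [Finset.gcd_image, show (id ∘ (· * d) : ℕ → ℕ) = (· * d) from rfl,
          gcd_mul_right'', hBg, one_mul]
      simp only [Finset.mem_filter, Finset.mem_powerset]
      exact ⟨⟨hsub.trans (Finset.filter_subset _ _), hBne.image _, by rw [hgcd]; exact hdn⟩, hgcd⟩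
    · have hdvd : ∀ a ∈ B.image (· * d), d ∣ a := by
        intro a ha
        simp only [Finset.mem_image] at ha
        obtain ⟨b, _, rfl⟩ := ha
        exact dvd_mul_left d b
      rw [Finset.image_image,
        Finset.image_congr (g := id) (fun b hb => by simp [Nat.mul_div_cancel _ hd0])]
      exact Finset.image_id
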